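/- Let k independent coin flips each have probability of heads at most 1/5. Then the probability that at least half of the k flips are heads is at most (4/5)^k. In particular, if k = 4.5·log(1/δ) with δ ∈ (0,1), this probability is less than δ. -/

import Mathlib

open MeasureTheory
open scoped ENNReal
/-- If `k` independent coin flips each come up heads with probability at most `1/5`, then
the probability that at least half of them are heads is at most `(4/5)^k`; in particular,
when `k = 4.5·log(1/δ)` with `δ ∈ (0,1)`, this probability is less than `δ`. -/
theorem majority_heads_bound (k : ℕ) (μ : Fin k → Measure Bool)
    [∀ i, IsProbabilityMeasure (μ i)]
    (hμ : ∀ i, μ i {true} ≤ ENNReal.ofReal (1 / 5)) :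
    (Measure.pi μ) {s | k ≤ 2 * (Finset.univ.filter fun i => s i = true).card}
        ≤ ENNReal.ofReal ((4 / 5 : ℝ) ^ k) ∧
    ∀ δ : ℝ, 0 < δ → δ < 1 → (k : ℝ) = 4.5 * Real.log (1 / δ) →
      (Measure.pi μ) {s | k ≤ 2 * (Finset.univ.filter fun i => s i = true).card}
          < ENNReal.ofReal δ := by
  classical
  have hμ' : ∀ i, μ i {true} ≤ (5 : ℝ≥0∞)⁻¹ := by
    intro i
    have h5 : ENNReal.ofReal (1/5) = (5:ℝ≥0∞)⁻¹ := by
      rw [one_div, ENNReal.ofReal_inv_of_pos (by norm_num), ENNReal.ofReal_ofNat]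
    exact h5 ▸ hμ i
  set E : Set (Fin k → Bool) :=
    {s | k ≤ 2 * (Finset.univ.filter fun i => s i = true).card} with hE
  set w : Bool → ℝ≥0∞ := fun b => if b = true then 4 else 1 with hw
  have main : (Measure.pi μ) E ≤ ENNReal.ofReal ((4 / 5 : ℝ) ^ k) := by
    set F : Finset (Fin k → Bool) := Finset.univ.filter (· ∈ E) with hF
    have hEU : E = ⋃ s ∈ F, ({s} : Set (Fin k → Bool)) := by
      ext s; simp [hF]
    have h1 : (Measure.pi μ) E ≤ ∑ s ∈ F, (Measure.pi μ) {s} := by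
      rw [hEU]; exact measure_biUnion_finset_le F _
    have hsing : ∀ s : Fin k → Bool, (Measure.pi μ) {s} = ∏ i, μ i {s i} := by
      intro s
      rw [← Set.univ_pi_singleton s, Measure.pi_pi]
    have key : ∀ s ∈ F, ∏ i, μ i {s i}
        ≤ (2:ℝ≥0∞)⁻¹ ^ k * ∏ i, w (s i) * μ i {s i} := by
      intro s hs
      have hcard : k ≤ 2 * (Finset.univ.filter fun i => s i = true).card := by
        have := Finset.mem_filter.1 hs
        simpa [hE] using this.2
      rw [Finset.prod_mul_distrib]
      have hwp : ∏ i, w (s i) = 4 ^ (Finset.univ.filter fun i => s i = true).card := by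
        simp only [hw]
        rw [Finset.prod_ite, Finset.prod_const, Finset.prod_const, one_pow, mul_one]
      rw [hwp]
      have hpow : (2:ℝ≥0∞) ^ k ≤ 4 ^ (Finset.univ.filter fun i => s i = true).card := by
        calc (2:ℝ≥0∞) ^ k ≤ 2 ^ (2 * (Finset.univ.filter fun i => s i = true).card) :=
              pow_le_pow_right₀ one_le_two hcard
          _ = 4 ^ (Finset.univ.filter fun i => s i = true).card := by
              rw [pow_mul]; norm_num
      calc ∏ i, μ i {s i}
          = (2:ℝ≥0∞)⁻¹ ^ k * ((2:ℝ≥0∞) ^ k * ∏ i, μ i {s i}) := by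
            rw [← mul_assoc, ← mul_pow, ENNReal.inv_mul_cancel (by norm_num) (by norm_num),
              one_pow, one_mul]
        _ ≤ (2:ℝ≥0∞)⁻¹ ^ k * (4 ^ (Finset.univ.filter fun i => s i = true).card
              * ∏ i, μ i {s i}) := by
            exact mul_le_mul_right (mul_le_mul_left hpow _) _
    have h2 : ∑ s ∈ F, ∏ i, μ i {s i}
        ≤ (2:ℝ≥0∞)⁻¹ ^ k * ∑ s : Fin k → Bool, ∏ i, w (s i) * μ i {s i} := by
      calc ∑ s ∈ F, ∏ i, μ i {s i}
          ≤ ∑ s ∈ F, (2:ℝ≥0∞)⁻¹ ^ k * ∏ i, w (s i) * μ i {s i} :=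
            Finset.sum_le_sum key
        _ = (2:ℝ≥0∞)⁻¹ ^ k * ∑ s ∈ F, ∏ i, w (s i) * μ i {s i} := by
            rw [Finset.mul_sum]
        _ ≤ (2:ℝ≥0∞)⁻¹ ^ k * ∑ s : Fin k → Bool, ∏ i, w (s i) * μ i {s i} :=
            mul_le_mul_right (Finset.sum_le_sum_of_subset (Finset.subset_univ F)) _
    have h3 : (∑ s : Fin k → Bool, ∏ i, w (s i) * μ i {s i})
        = ∏ i, (∑ b : Bool, w b * μ i {b}) := by
      rw [Finset.prod_univ_sum, Fintype.piFinset_univ]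
    have h4 : ∀ i, (∑ b : Bool, w b * μ i {b}) ≤ (8:ℝ≥0∞)/5 := by
      intro i
      have hsum : μ i {true} + μ i {false} = 1 := by
        have hd : Disjoint ({true} : Set Bool) {false} := by simp
        have hm := measure_union (μ := μ i) hd (measurableSet_singleton false)
        rw [show ({true} ∪ {false} : Set Bool) = Set.univ by ext b; cases b <;> simp,
          measure_univ] at hm
        exact hm.symm
      have : (∑ b : Bool, w b * μ i {b}) = 3 * μ i {true} + (μ i {true} + μ i {false}) := by
        simp only [Fintype.sum_bool, hw]
        norm_num
        ring
      rw [this, hsum]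
      calc (3:ℝ≥0∞) * μ i {true} + 1 ≤ 3 * 5⁻¹ + 1 := by
            exact add_le_add_left (mul_le_mul_right (hμ' i) _) _
        _ = 8/5 := by
            rw [ENNReal.div_eq_inv_mul,
              show (1:ℝ≥0∞) = 5 * 5⁻¹ by rw [ENNReal.mul_inv_cancel] <;> norm_num]
            ring
    have h5 : ∏ i, (∑ b : Bool, w b * μ i {b}) ≤ ((8:ℝ≥0∞)/5) ^ k := by
      calc ∏ i, (∑ b : Bool, w b * μ i {b}) ≤ ∏ _i : Fin k, (8:ℝ≥0∞)/5 :=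
            Finset.prod_le_prod' fun i _ => h4 i
        _ = ((8:ℝ≥0∞)/5) ^ k := by
            rw [Finset.prod_const, Finset.card_univ, Fintype.card_fin]
    have hfinal : (2:ℝ≥0∞)⁻¹ ^ k * ((8:ℝ≥0∞)/5) ^ k = ENNReal.ofReal ((4/5 : ℝ) ^ k) := by
      rw [ENNReal.ofReal_pow (by norm_num), ← mul_pow]
      congr 1
      have h2' : (2:ℝ≥0∞)⁻¹ = ENNReal.ofReal (1/2) := by
        rw [one_div, ENNReal.ofReal_inv_of_pos (by norm_num), ENNReal.ofReal_ofNat]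
      have h85 : (8:ℝ≥0∞)/5 = ENNReal.ofReal (8/5) := by
        rw [ENNReal.ofReal_div_of_pos (by norm_num), ENNReal.ofReal_ofNat,
          ENNReal.ofReal_ofNat]
      rw [h2', h85, ← ENNReal.ofReal_mul (by norm_num)]
      norm_num
    calc (Measure.pi μ) E ≤ ∑ s ∈ F, (Measure.pi μ) {s} := h1
      _ = ∑ s ∈ F, ∏ i, μ i {s i} := Finset.sum_congr rfl fun s _ => hsing s
      _ ≤ (2:ℝ≥0∞)⁻¹ ^ k * ∑ s : Fin k → Bool, ∏ i, w (s i) * μ i {s i} := h2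
      _ = (2:ℝ≥0∞)⁻¹ ^ k * ∏ i, (∑ b : Bool, w b * μ i {b}) := by rw [h3]
      _ ≤ (2:ℝ≥0∞)⁻¹ ^ k * ((8:ℝ≥0∞)/5) ^ k := mul_le_mul_right h5 _
      _ = ENNReal.ofReal ((4/5 : ℝ) ^ k) := hfinal
  refine ⟨main, fun δ hδ0 hδ1 hk => lt_of_le_of_lt main ?_⟩
  rw [ENNReal.ofReal_lt_ofReal_iff hδ0]
  have hL : (2/9 : ℝ) < Real.log (5/4) := by
    have h2 : Real.exp 2 < (5/4:ℝ)^9 := by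
      have h1 := Real.exp_one_lt_d9
      have h0 := Real.exp_pos 1
      have he : Real.exp 2 = Real.exp 1 * Real.exp 1 := by
        rw [← Real.exp_add]; norm_num
      rw [he]; nlinarith
    have hlt := (Real.lt_log_iff_exp_lt (by positivity : (0:ℝ) < (5/4:ℝ)^9)).2 h2
    rw [Real.log_pow] at hlt
    push_cast at hlt
    linarith
  have hlogδ : Real.log δ < 0 := Real.log_neg hδ0 hδ1
  have hkk : (k:ℝ) = -4.5 * Real.log δ := by
    rw [hk, one_div, Real.log_inv]; ring
  have h45 : Real.log (4/5 : ℝ) = - Real.log (5/4) := by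
    rw [show (4/5:ℝ) = (5/4)⁻¹ by norm_num, Real.log_inv]
  have hlhs : (4/5:ℝ)^k = Real.exp ((k:ℝ) * Real.log (4/5)) := by
    rw [← Real.log_pow, Real.exp_log (by positivity)]
  rw [hlhs, show δ = Real.exp (Real.log δ) from (Real.exp_log hδ0).symm]
  rw [Real.exp_lt_exp]
  rw [hkk, h45]
  nlinarith [hL, hlogδ]
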